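/- In the dendriform algebra, the associative product * and the over product satisfy x/(y*z) = (x/y)*z for all planar binary trees x, y, z. -/

import Mathlib

/-- Planar binary trees: a leaf `∘` or an ordered pair of planar binary trees. -/
inductive PBT : Type
  | leaf : PBT
  | node : PBT → PBT → PBT
deriving DecidableEq

namespace PBT

/-- The degree: the number of internal vertices. -/
def deg : PBT → ℕ
  | leaf => 0
  | node l r => deg l + deg r + 1

/-- The over product `x/y`: graft the root of `x` onto the leftmost leaf of `y`. -/
def overG (x : PBT) : PBT → PBT
  | leaf => x
  | node l r => node (overG x l) r

/-- The under product `x\y`: graft the root of `y` onto the rightmost leaf of `x`. -/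
def under : PBT → PBT → PBT
  | leaf, y => y
  | node l r, y => node l (under r y)

/-- Left-right reversal: swap the two subtrees at every internal vertex. -/
def rev : PBT → PBT
  | leaf => leaf
  | node l r => node (rev r) (rev l)

/-- `move x y` : `y` is obtained from `x` by one elementary Tamari move,
replacing a subtree `(a (b c))` by `((a b) c)` (a right rotation, going down). -/
inductive move : PBT → PBT → Prop
  | rot (a b c : PBT) : move (node a (node b c)) (node (node a b) c)
  | left {a a' : PBT} (b : PBT) : move a a' → move (node a b) (node a' b)
  | right (a : PBT) {b b' : PBT} : move b b' → move (node a b) (node a b')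

/-- The Tamari order: `x ≤ y` iff `x` is obtained from `y` by a sequence of
elementary moves. -/
def tle (x y : PBT) : Prop := Relation.ReflTransGen move y x

/-- The left comb of degree `n`. -/
def leftComb : ℕ → PBT
  | 0 => leaf
  | n+1 => node (leftComb n) leaf

/-- The right comb of degree `n`. -/
def rightComb : ℕ → PBT
  | 0 => leaf
  | n+1 => node leaf (rightComb n)

end PBT

namespace PBT

lemma deg_over (x : PBT) : ∀ u : PBT, (x.overG u).deg = x.deg + u.deg
  | leaf => by simp [overG, deg]
  | node l r => by simp [overG, deg, deg_over x l]; omega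

/-- a strictly decreasing measure for `move`. -/
def m : PBT → ℕ
  | leaf => 0
  | node l r => m l + m r + deg r

lemma move_deg {a b : PBT} (h : move a b) : a.deg = b.deg := by
  induction h with
  | rot a b c => simp [deg]; omega
  | left b _ ih => simp [deg, ih]
  | right a _ ih => simp [deg, ih]

lemma move_m {a b : PBT} (h : move a b) : m b < m a := by
  induction h with
  | rot a b c => simp [m, deg]; omega
  | left b _ ih => simp [m]; omega
  | right a h ih => simp [m, move_deg h]; omega

lemma rtg_m {a b : PBT} (h : Relation.ReflTransGen move a b) : m b ≤ m a := by
  induction h with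
  | refl => exact le_refl _
  | tail _ hbc ih => exact le_trans (le_of_lt (move_m hbc)) ih

lemma rtg_deg {a b : PBT} (h : Relation.ReflTransGen move a b) : a.deg = b.deg := by
  induction h with
  | refl => rfl
  | tail _ hbc ih => exact ih.trans (move_deg hbc)

lemma rtg_antisymm {a b : PBT} (h1 : Relation.ReflTransGen move a b)
    (h2 : Relation.ReflTransGen move b a) : a = b := by
  rcases Relation.ReflTransGen.cases_head h1 with h | ⟨c, hac, hcb⟩
  · exact h
  · exact absurd (lt_of_le_of_lt (le_trans (rtg_m h2) (rtg_m hcb)) (move_m hac)) (lt_irrefl _)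

lemma move_over {u u' : PBT} (x : PBT) (h : move u u') : move (x.overG u) (x.overG u') := by
  induction h with
  | rot a b c => exact move.rot (x.overG a) b c
  | left b _ ih => exact move.left b ih
  | right a h _ => exact move.right (x.overG a) h

lemma tle_over {a b : PBT} (x : PBT) (h : tle a b) : tle (x.overG a) (x.overG b) :=
  Relation.ReflTransGen.lift x.overG (fun _ _ h => move_over x h) _ _ h

lemma over_over (x y : PBT) : ∀ z : PBT, (x.overG y).overG z = x.overG (y.overG z)
  | leaf => rfl
  | node l r => by simp [overG, over_over x y l]

lemma under_over (x : PBT) {y : PBT} (hy : y ≠ leaf) (z : PBT) :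
    (x.overG y).under z = x.overG (y.under z) := by
  cases y with
  | leaf => exact absurd rfl hy
  | node l r => simp [overG, under]

lemma over_eq_over {x p : PBT} : ∀ u v : PBT, x.overG u = p.overG v → x.deg = p.deg →
    x = p ∧ u = v
  | leaf, leaf, h, _ => ⟨h, rfl⟩
  | leaf, node l r, h, hd => by
      simp only [overG] at h
      have := congrArg deg h
      simp [deg, deg_over] at this
      omega
  | node l r, leaf, h, hd => by
      simp only [overG] at h
      have := congrArg deg h
      simp [deg, deg_over] at this
      omega
  | node l r, node l' r', h, hd => by
      simp only [overG, node.injEq] at h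
      obtain ⟨h1, h2⟩ := over_eq_over l l' h.1 hd
      exact ⟨h1, by rw [h2, h.2]⟩

lemma move_decomp : ∀ {w w' : PBT}, move w w' → ∀ p u : PBT, w = p.overG u →
    ∃ p' u', w' = p'.overG u' ∧ ((move p p' ∧ u' = u) ∨ (p' = p ∧ move u u')) := by
  intro w w' h
  induction h with
  | rot a b c =>
    intro p u hw
    cases u with
    | leaf =>
      simp only [overG] at hw
      subst hw
      exact ⟨node (node a b) c, leaf, rfl, Or.inl ⟨move.rot a b c, rfl⟩⟩
    | node l r =>
      simp only [overG, node.injEq] at hw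
      refine ⟨p, node (node l b) c, ?_, Or.inr ⟨rfl, ?_⟩⟩
      · simp [overG, hw.1]
      · rw [← hw.2]; exact move.rot l b c
  | @left a a' b ha ih =>
    intro p u hw
    cases u with
    | leaf =>
      simp only [overG] at hw
      subst hw
      exact ⟨node a' b, leaf, rfl, Or.inl ⟨move.left b ha, rfl⟩⟩
    | node l r =>
      simp only [overG, node.injEq] at hw
      obtain ⟨p1, l1, ha', hcase⟩ := ih p l hw.1
      rcases hcase with ⟨hm, hl⟩ | ⟨hp, hm⟩
      · exact ⟨p1, node l r, by simp [overG, ha', hl, hw.2], Or.inl ⟨hm, rfl⟩⟩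
      · exact ⟨p1, node l1 r, by simp [overG, ha', hw.2], Or.inr ⟨hp, move.left r hm⟩⟩
  | @right a b b' hb ih =>
    intro p u hw
    cases u with
    | leaf =>
      simp only [overG] at hw
      subst hw
      exact ⟨node a b', leaf, rfl, Or.inl ⟨move.right a hb, rfl⟩⟩
    | node l r =>
      simp only [overG, node.injEq] at hw
      refine ⟨p, node l b', ?_, Or.inr ⟨rfl, ?_⟩⟩
      · simp [overG, hw.1]
      · rw [hw.2] at hb; exact move.right l hb

lemma rtg_decomp {w w'' : PBT} (h : Relation.ReflTransGen move w w'') :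
    ∀ p u : PBT, w = p.overG u →
    ∃ p'' u'', w'' = p''.overG u'' ∧ Relation.ReflTransGen move p p'' ∧
      (p'' = p → Relation.ReflTransGen move u u'') := by
  induction h with
  | refl =>
    intro p u hw
    exact ⟨p, u, hw, Relation.ReflTransGen.refl, fun _ => Relation.ReflTransGen.refl⟩
  | @tail b c _ hbc ih =>
    intro p u hw
    obtain ⟨p1, u1, hb, hp1, hu1⟩ := ih p u hw
    obtain ⟨p2, u2, hc, hcase⟩ := move_decomp hbc p1 u1 hb
    rcases hcase with ⟨hm, hu2⟩ | ⟨hp2, hm⟩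
    · refine ⟨p2, u2, hc, hp1.tail hm, fun h2 => ?_⟩
      exfalso
      have hlt := lt_of_lt_of_le (move_m hm) (rtg_m hp1)
      rw [h2] at hlt
      exact lt_irrefl _ hlt
    · refine ⟨p2, u2, hc, ?_, fun h2 => ?_⟩
      · rw [hp2]; exact hp1
      · rw [hp2] at h2
        exact (hu1 h2).tail hm

lemma tle_over_cancel {x a b : PBT} (h : tle (x.overG a) (x.overG b)) : tle a b := by
  obtain ⟨p, u, heq, hp, hu⟩ := rtg_decomp h x b rfl
  obtain ⟨hpx, hub⟩ := over_eq_over a u heq (rtg_deg hp)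
  show Relation.ReflTransGen move b a
  rw [hub]
  exact hu hpx.symm

lemma mem_over {x v t w : PBT} (h1 : tle (x.overG v) w) (h2 : tle w (x.overG t)) :
    ∃ u, w = x.overG u := by
  obtain ⟨p, u, hw, hp, _⟩ := rtg_decomp h2 x t rfl
  obtain ⟨q, s, hbot, hq, _⟩ := rtg_decomp h1 p u hw
  obtain ⟨hqx, _⟩ := over_eq_over v s hbot ((rtg_deg hp).trans (rtg_deg hq))
  rw [← hqx] at hq
  have hpx : x = p := rtg_antisymm hp hq
  exact ⟨u, by rw [hpx]; exact hw⟩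

lemma ne_leaf_of_deg {y : PBT} (hy : 1 ≤ y.deg) : y ≠ leaf := by
  cases y with
  | leaf => simp [deg] at hy
  | node l r => exact fun h => PBT.noConfusion h

end PBT

open Classical in
/-- The dendriform associative product `*` of two basis trees, as a formal
`ℤ`-linear combination of trees: `x * y` is the sum of all trees `z` with
`x/y ≤ z ≤ x\y` in the Tamari order. -/
noncomputable def starC (x y : PBT) : PBT → ℤ := fun z =>
  if PBT.tle (x.overG y) z ∧ PBT.tle z (x.under y) then 1 else 0

/-- In the dendriform algebra, `x/(y*z) = (x/y)*z`: the coefficient of `x/u`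
in `(x/y)*z` equals the coefficient of `u` in `y*z`, and the coefficient in
`(x/y)*z` of any tree not of the form `x/u` vanishes. -/
theorem stmt14 (x y z : PBT) (hx : 1 ≤ x.deg) (hy : 1 ≤ y.deg) (hz : 1 ≤ z.deg) :
    (∀ u : PBT, starC (x.overG y) z (x.overG u) = starC y z u) ∧
    (∀ w : PBT, (∀ u : PBT, w ≠ x.overG u) → starC (x.overG y) z w = 0) := by
  have hyl : y ≠ PBT.leaf := PBT.ne_leaf_of_deg hy
  constructor
  · intro u
    simp only [starC]
    rw [PBT.over_over, PBT.under_over x hyl]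
    by_cases h : PBT.tle (y.overG z) u ∧ PBT.tle u (y.under z)
    · rw [if_pos h, if_pos ⟨PBT.tle_over x h.1, PBT.tle_over x h.2⟩]
    · rw [if_neg h, if_neg (fun hc => h ⟨PBT.tle_over_cancel hc.1, PBT.tle_over_cancel hc.2⟩)]
  · intro w hw
    simp only [starC]
    rw [if_neg]
    rintro ⟨h1, h2⟩
    rw [PBT.over_over] at h1
    rw [PBT.under_over x hyl] at h2
    obtain ⟨u, hu⟩ := PBT.mem_over h1 h2
    exact hw u hu
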